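/- If a_1 < a_2 < ... < a_k are pairwise relatively prime natural numbers, each greater than 1, each composite, and each at most n, then k ≤ π(√n), where π is the prime counting function. -/

import Mathlib

theorem stmt_7 (k n : ℕ) (a : Fin k → ℕ) (hmono : StrictMono a)
    (h1 : ∀ i, 1 < a i) (hcomp : ∀ i, ¬ (a i).Prime) (hle : ∀ i, a i ≤ n)
    (hcop : ∀ i j, i ≠ j → Nat.Coprime (a i) (a j)) :
    k ≤ Nat.primeCounting (Nat.sqrt n) := by
  have hπ : Nat.primeCounting (Nat.sqrt n)
      = ((Finset.range (Nat.sqrt n + 1)).filter Nat.Prime).card := by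
    rw [Nat.primeCounting, Nat.primeCounting', Nat.count_eq_card_filter_range]
  rw [hπ]
  have := Finset.card_le_card_of_injOn (f := fun i => Nat.minFac (a i))
    (s := (Finset.univ : Finset (Fin k)))
    (t := (Finset.range (Nat.sqrt n + 1)).filter Nat.Prime) ?_ ?_
  · simpa using this
  · intro i _
    rw [Finset.mem_coe, Finset.mem_filter, Finset.mem_range]
    have hp : (Nat.minFac (a i)).Prime := Nat.minFac_prime (Nat.ne_of_gt (h1 i))
    refine ⟨Nat.lt_succ_of_le ?_, hp⟩
    have hsq : Nat.minFac (a i) ^ 2 ≤ a i :=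
      Nat.minFac_sq_le_self (lt_trans one_pos (h1 i)) (hcomp i)
    have : Nat.minFac (a i) * Nat.minFac (a i) ≤ n := by nlinarith [hsq, hle i]
    exact Nat.le_sqrt.mpr this
  · intro i _ j _ hij
    by_contra hne
    have hd1 : Nat.minFac (a i) ∣ a i := Nat.minFac_dvd _
    have hd2 : Nat.minFac (a i) ∣ a j := by simp only at hij; rw [hij]; exact Nat.minFac_dvd _
    have := Nat.Coprime.eq_one_of_dvd ((hcop i j hne).coprime_dvd_left hd1) hd2
    exact Nat.Prime.one_lt (Nat.minFac_prime (Nat.ne_of_gt (h1 i))) |>.ne' this
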